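/- arXiv:2402.03845 — 2 statements merged into one kernel-verified Lean document; each statement's English description precedes it below -/
import Mathlib

section
/- Let p : E → ℝ be differentiable and positive, let f, r : E → E be differentiable, and let c > 0 be a real constant. Then for every x ∈ E: div (fun y => p y • (f y - c • r y)) (x) = div (fun y => p y • f y) (x) holds if and only if div r(x) + ⟪r(x), ∇(Real.log ∘ p)(x)⟫ = 0. (Equations (10)–(11): replacing the true score by a perturbed vector field leaves the Fokker–Planck right-hand side unchanged exactly when the remainder r satisfies the gauge freedom condition.) -/
open scoped RealInnerProductSpace

/-- The divergence of a vector field `v` at `x`: the trace of its Fréchet derivative. -/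
noncomputable def div {D : ℕ} (v : EuclideanSpace ℝ (Fin D) → EuclideanSpace ℝ (Fin D))
    (x : EuclideanSpace ℝ (Fin D)) : ℝ :=
  LinearMap.trace ℝ (EuclideanSpace ℝ (Fin D)) (fderiv ℝ v x).toLinearMap

lemma trace_smulRight_aux {D : ℕ} (l : EuclideanSpace ℝ (Fin D) →L[ℝ] ℝ)
    (v : EuclideanSpace ℝ (Fin D)) :
    LinearMap.trace ℝ (EuclideanSpace ℝ (Fin D)) (l.smulRight v).toLinearMap = l v := by
  classical
  let b := (EuclideanSpace.basisFun (Fin D) ℝ).toBasis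
  rw [LinearMap.trace_eq_matrix_trace ℝ b, Matrix.trace]
  have hv : v = ∑ i, v i • b i := by
    have := (b.sum_repr v).symm
    simpa [b] using this
  calc ∑ i, (LinearMap.toMatrix b b (l.smulRight v).toLinearMap).diag i
      = ∑ i, v i * l (b i) := by
        apply Finset.sum_congr rfl
        intro i _
        simp [Matrix.diag, LinearMap.toMatrix_apply, b, mul_comm]
    _ = l v := by
        conv_rhs => rw [hv]
        simp [map_sum, mul_comm]

lemma inner_gradient_eq {D : ℕ} (h : EuclideanSpace ℝ (Fin D) → ℝ)
    (x v : EuclideanSpace ℝ (Fin D)) :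
    ⟪v, gradient h x⟫ = fderiv ℝ h x v := by
  rw [real_inner_comm, gradient, ← InnerProductSpace.toDual_apply_apply,
    LinearIsometryEquiv.apply_symm_apply]

lemma div_smul {D : ℕ} (p : EuclideanSpace ℝ (Fin D) → ℝ)
    (r : EuclideanSpace ℝ (Fin D) → EuclideanSpace ℝ (Fin D))
    (x : EuclideanSpace ℝ (Fin D)) (hp : DifferentiableAt ℝ p x)
    (hr : DifferentiableAt ℝ r x) :
    div (fun y => p y • r y) x = p x * div r x + fderiv ℝ p x (r x) := by
  have hd : fderiv ℝ (fun y => p y • r y) x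
      = p x • fderiv ℝ r x + (fderiv ℝ p x).smulRight (r x) := by
    exact (hp.hasFDerivAt.smul hr.hasFDerivAt).fderiv
  rw [div, hd]
  simp only [ContinuousLinearMap.coe_add, ContinuousLinearMap.coe_smul, map_add, map_smul]
  rw [trace_smulRight_aux]
  rfl

/-- Replacing `f` by `f - c • r` leaves the Fokker–Planck right-hand side unchanged
at `x` exactly when `r` satisfies the gauge freedom condition at `x`. -/
theorem stmt1 (D : ℕ) (hD : 1 ≤ D)
    (p : EuclideanSpace ℝ (Fin D) → ℝ) (hp : Differentiable ℝ p)
    (hppos : ∀ x, 0 < p x)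
    (f r : EuclideanSpace ℝ (Fin D) → EuclideanSpace ℝ (Fin D))
    (hf : Differentiable ℝ f) (hr : Differentiable ℝ r)
    (c : ℝ) (hc : 0 < c)
    (x : EuclideanSpace ℝ (Fin D)) :
    div (fun y => p y • (f y - c • r y)) x = div (fun y => p y • f y) x
      ↔ div r x + ⟪r x, gradient (Real.log ∘ p) x⟫ = 0 := by
  have hpx := (hppos x).ne'
  -- rewrite LHS
  have hsplit : (fun y => p y • (f y - c • r y))
      = fun y => (p y • f y) - c • (p y • r y) := by
    funext y
    rw [smul_sub, smul_comm]
  have hpf : DifferentiableAt ℝ (fun y => p y • f y) x :=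
    ((hp x).smul (hf x))
  have hpr : DifferentiableAt ℝ (fun y => p y • r y) x :=
    ((hp x).smul (hr x))
  have hfd : fderiv ℝ (fun y => p y • (f y - c • r y)) x
      = fderiv ℝ (fun y => p y • f y) x - c • fderiv ℝ (fun y => p y • r y) x := by
    rw [hsplit]
    rw [fderiv_fun_sub (g := fun y => c • (p y • r y)) hpf (hpr.const_smul c), fderiv_fun_const_smul hpr]
  have hL : div (fun y => p y • (f y - c • r y)) x
      = div (fun y => p y • f y) x - c * div (fun y => p y • r y) x := by
    rw [div, hfd]
    simp only [ContinuousLinearMap.coe_sub, ContinuousLinearMap.coe_smul, map_sub, map_smul]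
    rfl
  -- gradient of log ∘ p
  have hlog : fderiv ℝ (Real.log ∘ p) x = (p x)⁻¹ • fderiv ℝ p x := by
    have : HasFDerivAt (Real.log ∘ p) ((p x)⁻¹ • fderiv ℝ p x) x := by
      have h1 := (Real.hasDerivAt_log hpx).comp_hasFDerivAt x (hp x).hasFDerivAt
      simpa [smul_smul] using h1
    exact this.fderiv
  have hinner : ⟪r x, gradient (Real.log ∘ p) x⟫ = (p x)⁻¹ * fderiv ℝ p x (r x) := by
    rw [inner_gradient_eq, hlog]; rfl
  rw [hL, div_smul p r x (hp x) (hr x), hinner]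
  constructor
  · intro h
    have h2 : c * (p x * div r x + fderiv ℝ p x (r x)) = 0 := by linarith
    have h3 : p x * div r x + fderiv ℝ p x (r x) = 0 :=
      (mul_eq_zero.mp h2).resolve_left hc.ne'
    field_simp
    linarith
  · intro h
    have h3 : p x * div r x + fderiv ℝ p x (r x) = 0 := by
      have := congrArg (fun t => p x * t) h
      field_simp at this ⊢
      linarith
    rw [h3]
    ring
end

section
/- Let P : ℝ → Matrix (Fin D) (Fin D) ℝ be differentiable with P(t) symmetric for every t, let pvec : ℝ → (Fin D → ℝ) be differentiable with ‖pvec(t)‖ = 1 (Euclidean norm) for every t, and let λ : ℝ → ℝ satisfy P(t) *ᵥ pvec(t) = λ(t) • pvec(t) for every t. Then λ is differentiable and λ'(t) = ⟪pvec(t), P'(t) *ᵥ pvec(t)⟫ for every t, where P'(t) denotes the derivative of P at t. (Equation (22) in the proof of Lemma 1: the derivative of an eigenvalue along a differentiable unit eigenvector curve of a symmetric matrix family.) -/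
open Matrix

attribute [local instance] Matrix.normedAddCommGroup Matrix.normedSpace

/-- Equation (22): the derivative of an eigenvalue along a differentiable unit
eigenvector curve of a differentiable symmetric matrix family:
λ'(t) = ⟪p(t), P'(t) p(t)⟫. -/
theorem stmt12 (D : ℕ) (hD : 1 ≤ D)
    (P P' : ℝ → Matrix (Fin D) (Fin D) ℝ)
    (hP : ∀ t, HasDerivAt P (P' t) t)
    (hsymm : ∀ t, (P t).IsSymm)
    (pvec : ℝ → (Fin D → ℝ))
    (hpvec : Differentiable ℝ pvec)
    (hunit : ∀ t, ‖(WithLp.equiv 2 (Fin D → ℝ)).symm (pvec t)‖ = 1)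
    (lam : ℝ → ℝ)
    (heig : ∀ t, P t *ᵥ pvec t = lam t • pvec t) :
    ∀ t, HasDerivAt lam (pvec t ⬝ᵥ (P' t *ᵥ pvec t)) t := by
  intro t
  set pv' := deriv pvec with hpv'def
  have hpd : HasDerivAt pvec (pv' t) t := (hpvec t).hasDerivAt
  have hpdc : ∀ i, HasDerivAt (fun s => pvec s i) (pv' t i) t :=
    fun i => hasDerivAt_pi.1 hpd i
  have hPe : ∀ i j, HasDerivAt (fun s => P s i j) (P' t i j) t :=
    fun i j => hasDerivAt_pi.1 (hasDerivAt_pi.1 (hP t) i) j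
  -- unit norm gives dot product 1
  have hsum : ∀ s, pvec s ⬝ᵥ pvec s = 1 := by
    intro s
    have h := hunit s
    rw [EuclideanSpace.norm_eq] at h
    have h2 := Real.sqrt_eq_one.mp h
    simpa [dotProduct, Real.norm_eq_abs, sq_abs, sq] using h2
  -- lam as a quadratic form
  have hlam : lam = fun s => pvec s ⬝ᵥ (P s *ᵥ pvec s) := by
    funext s
    rw [heig s, dotProduct_smul, smul_eq_mul, hsum s, mul_one]
  -- orthogonality of pv' and pvec
  have horth : pvec t ⬝ᵥ pv' t = 0 := by
    have h1 : HasDerivAt (fun s => ∑ i, pvec s i * pvec s i)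
        (∑ i, (pv' t i * pvec t i + pvec t i * pv' t i)) t :=
      HasDerivAt.fun_sum fun i _ => (hpdc i).mul (hpdc i)
    have h2 : HasDerivAt (fun s => ∑ i, pvec s i * pvec s i) 0 t := by
      have : (fun s => ∑ i, pvec s i * pvec s i) = fun _ => (1 : ℝ) := by
        funext s; simpa [dotProduct] using hsum s
      rw [this]; exact hasDerivAt_const t 1
    have h3 := h1.unique h2
    have h4 : (2 : ℝ) * (pvec t ⬝ᵥ pv' t) = 0 := by
      rw [dotProduct, Finset.mul_sum, ← h3]
      exact Finset.sum_congr rfl fun i _ => by ring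
    linarith
  have horth' : pv' t ⬝ᵥ pvec t = 0 := by rw [dotProduct_comm]; exact horth
  -- derivative of the quadratic form
  have hmain : HasDerivAt (fun s => ∑ i, pvec s i * ∑ j, P s i j * pvec s j)
      (∑ i, (pv' t i * ∑ j, P t i j * pvec t j
        + pvec t i * ∑ j, (P' t i j * pvec t j + P t i j * pv' t j))) t := by
    refine HasDerivAt.fun_sum fun i _ => (hpdc i).mul (HasDerivAt.fun_sum fun j _ => ?_)
    exact (hPe i j).mul (hpdc j)
  -- identify the derivative value
  have hval : (∑ i, (pv' t i * ∑ j, P t i j * pvec t j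
        + pvec t i * ∑ j, (P' t i j * pvec t j + P t i j * pv' t j)))
      = pvec t ⬝ᵥ (P' t *ᵥ pvec t) := by
    have expand : (∑ i, (pv' t i * ∑ j, P t i j * pvec t j
        + pvec t i * ∑ j, (P' t i j * pvec t j + P t i j * pv' t j)))
      = pv' t ⬝ᵥ (P t *ᵥ pvec t) + (pvec t ⬝ᵥ (P' t *ᵥ pvec t)
        + pvec t ⬝ᵥ (P t *ᵥ pv' t)) := by
      simp only [dotProduct, mulVec, Finset.mul_sum, mul_add, Finset.sum_add_distrib]
    have e1 : pv' t ⬝ᵥ (P t *ᵥ pvec t) = 0 := by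
      rw [heig t, dotProduct_smul, smul_eq_mul, horth', mul_zero]
    have e2 : pvec t ⬝ᵥ (P t *ᵥ pv' t) = 0 := by
      rw [dotProduct_mulVec]
      have : pvec t ᵥ* P t = P t *ᵥ pvec t := by
        conv_lhs => rw [← (hsymm t).eq]
        exact vecMul_transpose _ _
      rw [this, heig t, smul_dotProduct, smul_eq_mul, horth, mul_zero]
    rw [expand, e1, e2, zero_add, add_zero]
  rw [hlam]
  have : (fun s => pvec s ⬝ᵥ (P s *ᵥ pvec s))
      = fun s => ∑ i, pvec s i * ∑ j, P s i j * pvec s j := by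
    funext s; simp [dotProduct, mulVec]
  rw [this, ← hval]
  exact hmain
end
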